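/- Let Σ ∈ ℝ^{n×n} be symmetric positive semidefinite with eigenvalues λ₁ ≥ … ≥ λ_n, let m < n/2, and let σ₁ ≥ … ≥ σ_m ≥ 0 satisfy λ_{n−m+i} ≤ σ_i ≤ λ_i for i = 1,…,m. Then there exists V ∈ O(m,n) (i.e., VVᵀ = I_m) such that VΣVᵀ = diag(σ₁,…,σ_m). -/

import Mathlib

open MeasureTheory ENNReal

noncomputable section

/-- The affine map `x ↦ Vx + b` from `ℝⁿ` to `ℝᵐ` (Euclidean spaces). -/
def phiAff {m n : ℕ} (V : Matrix (Fin m) (Fin n) ℝ)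
    (b : EuclideanSpace ℝ (Fin m)) (x : EuclideanSpace ℝ (Fin n)) :
    EuclideanSpace ℝ (Fin m) :=
  (EuclideanSpace.equiv (Fin m) ℝ).symm
    (V.mulVec (EuclideanSpace.equiv (Fin n) ℝ x) + (EuclideanSpace.equiv (Fin m) ℝ) b)

/-- The `p`-Wasserstein distance: infimum over couplings of
`(∫ ‖x − y‖^p dγ)^{1/p}` (Euclidean norm). -/
def wassersteinDist (p : ℝ) {k : ℕ}
    (μ ν : Measure (EuclideanSpace ℝ (Fin k))) : ℝ :=
  sInf {r : ℝ | ∃ γ : Measure (EuclideanSpace ℝ (Fin k) × EuclideanSpace ℝ (Fin k)),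
    γ.map Prod.fst = μ ∧ γ.map Prod.snd = ν ∧
    r = (∫ z, ‖z.1 - z.2‖ ^ p ∂γ) ^ (1 / p)}

/-- The `f`-divergence `D_f(μ‖ν) = ∫ f(dμ/dν) dν`. -/
def fDivergence (f : ℝ → ℝ) {k : ℕ}
    (μ ν : Measure (EuclideanSpace ℝ (Fin k))) : ℝ :=
  ∫ x, f ((μ.rnDeriv ν x).toReal) ∂ν

/-- The Kullback–Leibler divergence `∫ log(dμ/dν) dμ`. -/
def klDivergence {k : ℕ} (μ ν : Measure (EuclideanSpace ℝ (Fin k))) : ℝ :=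
  ∫ x, Real.log ((μ.rnDeriv ν x).toReal) ∂μ

/-- The mixture `(1−θ)μ + θν`. -/
def mixture (θ : ℝ) {k : ℕ} (μ ν : Measure (EuclideanSpace ℝ (Fin k))) :
    Measure (EuclideanSpace ℝ (Fin k)) :=
  ENNReal.ofReal (1 - θ) • μ + ENNReal.ofReal θ • ν

/-- The θ-weighted Jensen–Shannon divergence. -/
def jsDivergence (θ : ℝ) {k : ℕ} (μ ν : Measure (EuclideanSpace ℝ (Fin k))) : ℝ :=
  (1 / 2) * klDivergence μ (mixture θ μ ν) + (1 / 2) * klDivergence ν (mixture θ ν μ)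

/-- The total variation metric `sup_A |μ(A) − ν(A)|`. -/
def tvDist {k : ℕ} (μ ν : Measure (EuclideanSpace ℝ (Fin k))) : ℝ :=
  sSup {r : ℝ | ∃ A : Set (EuclideanSpace ℝ (Fin k)), MeasurableSet A ∧
    r = |(μ A).toReal - (ν A).toReal|}

/-- The Hellinger squared divergence `∫ (√(dμ/dν) − 1)² dν`. -/
def hellingerSq {k : ℕ} (μ ν : Measure (EuclideanSpace ℝ (Fin k))) : ℝ :=
  ∫ x, (Real.sqrt ((μ.rnDeriv ν x).toReal) - 1) ^ 2 ∂ν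

/-- `ν` has a strictly positive density w.r.t. Lebesgue measure. -/
def HasPosDensity {k : ℕ} (ν : Measure (EuclideanSpace ℝ (Fin k))) : Prop :=
  ∃ t : EuclideanSpace ℝ (Fin k) → ℝ, Measurable t ∧ (∀ x, 0 < t x) ∧
    ν = volume.withDensity fun x => ENNReal.ofReal (t x)

end

theorem exists_stiefel_diagonal {m n : ℕ} (hmn : 2 * m < n)
    (lam : Fin n → ℝ) (hanti : Antitone lam) (hpos : ∀ i, 0 ≤ lam i)
    (Q : Matrix (Fin n) (Fin n) ℝ) (hQ : Q * Q.transpose = 1)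
    (S : Matrix (Fin n) (Fin n) ℝ)
    (hS : S = Q * Matrix.diagonal lam * Q.transpose)
    (σ' : Fin m → ℝ) (hσanti : Antitone σ') (hσpos : ∀ i, 0 ≤ σ' i)
    (hbound : ∀ i : Fin m,
      lam ⟨n - m + i.1, by have := i.isLt; omega⟩ ≤ σ' i ∧
      σ' i ≤ lam ⟨i.1, by have := i.isLt; omega⟩) :
    ∃ V : Matrix (Fin m) (Fin n) ℝ, V * V.transpose = 1 ∧
      V * S * V.transpose = Matrix.diagonal σ' := by
  classical
  set e : Fin m → Fin n := fun i => ⟨i.1, by have := i.isLt; omega⟩ with he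
  set g : Fin m → Fin n := fun i => ⟨n - m + i.1, by have := i.isLt; omega⟩ with hg
  have hbd : ∀ i, lam (g i) ≤ σ' i ∧ σ' i ≤ lam (e i) := fun i => hbound i
  have hle : ∀ i, lam (g i) ≤ lam (e i) := fun i =>
    hanti (by simp only [he, hg, Fin.le_def]; omega)
  set t : Fin m → ℝ := fun i =>
    if lam (e i) = lam (g i) then 1 else (σ' i - lam (g i)) / (lam (e i) - lam (g i))
      with ht
  have ht0 : ∀ i, 0 ≤ t i := by
    intro i
    simp only [ht]
    split
    · norm_num
    · rename_i h
      have hlt : lam (g i) < lam (e i) := lt_of_le_of_ne (hle i) (Ne.symm h)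
      have := (hbd i).1
      apply div_nonneg <;> linarith
  have ht1 : ∀ i, t i ≤ 1 := by
    intro i
    simp only [ht]
    split
    · exact le_refl _
    · rename_i h
      have hlt : lam (g i) < lam (e i) := lt_of_le_of_ne (hle i) (Ne.symm h)
      rw [div_le_one (by linarith)]
      have := (hbd i).2
      linarith
  set s : Fin m → ℝ := fun i => Real.sqrt (t i) with hs
  set c : Fin m → ℝ := fun i => Real.sqrt (1 - t i) with hc
  have hs2 : ∀ i, s i ^ 2 = t i := fun i => Real.sq_sqrt (ht0 i)
  have hc2 : ∀ i, c i ^ 2 = 1 - t i := fun i => Real.sq_sqrt (by linarith [ht1 i])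
  have hσeq : ∀ i, s i ^ 2 * lam (e i) + c i ^ 2 * lam (g i) = σ' i := by
    intro i
    rw [hs2, hc2]
    simp only [ht]
    split
    · rename_i h
      have h1 := (hbd i).1
      have h2 := (hbd i).2
      rw [h] at h2
      ring_nf
      linarith
    · rename_i h
      have hlt : lam (g i) < lam (e i) := lt_of_le_of_ne (hle i) (Ne.symm h)
      have hne : lam (e i) - lam (g i) ≠ 0 := by linarith
      have hcan : (σ' i - lam (g i)) / (lam (e i) - lam (g i)) * (lam (e i) - lam (g i))
          = σ' i - lam (g i) := div_mul_cancel₀ _ hne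
      nlinarith [hcan]
  set A : Matrix (Fin m) (Fin n) ℝ :=
    Matrix.of fun i j => (if j = e i then s i else 0) + (if j = g i then c i else 0)
      with hA
  have heg : ∀ i k : Fin m, e i ≠ g k := by
    intro i k
    simp only [he, hg, ne_eq, Fin.ext_iff]
    have := i.isLt; have := k.isLt; omega
  have hee : ∀ i k : Fin m, e i = e k ↔ i = k := by
    intro i k
    simp only [he, Fin.ext_iff]
  have hgg : ∀ i k : Fin m, g i = g k ↔ i = k := by
    intro i k
    simp only [hg, Fin.ext_iff]
    omega
  have key : ∀ d : Fin n → ℝ, A * Matrix.diagonal d * A.transpose =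
      Matrix.diagonal (fun i => s i ^ 2 * d (e i) + c i ^ 2 * d (g i)) := by
    intro d
    ext i k
    rw [Matrix.mul_apply]
    simp only [Matrix.mul_diagonal, Matrix.transpose_apply]
    have hzero : ∀ j ∈ (Finset.univ : Finset (Fin n)),
        j ∉ ({e i, g i} : Finset (Fin n)) → A i j * d j * A k j = 0 := by
      intro j _ hj
      simp only [Finset.mem_insert, Finset.mem_singleton, not_or] at hj
      simp [hA, hj.1, hj.2]
    rw [← Finset.sum_subset (Finset.subset_univ _) hzero,
      Finset.sum_pair (heg i i)]
    have hAe : A i (e i) = s i := by simp [hA, heg i i]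
    have hAg : A i (g i) = c i := by simp [hA, (heg i i).symm]
    by_cases hik : i = k
    · subst hik
      rw [hAe, hAg, Matrix.diagonal_apply_eq]
      ring
    · have e1 : e i ≠ e k := fun h => hik ((hee i k).mp h)
      have g1 : g i ≠ e k := (heg k i).symm
      have g2 : g i ≠ g k := fun h => hik ((hgg i k).mp h)
      have h1 : A k (e i) = 0 := by simp [hA, e1, heg i k]
      have h2 : A k (g i) = 0 := by simp [hA, g1, g2]
      rw [h1, h2, Matrix.diagonal_apply_ne _ hik]
      ring
  have hQ' : Q.transpose * Q = 1 := mul_eq_one_comm.mp hQ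
  refine ⟨A * Q.transpose, ?_, ?_⟩
  · have : A * Q.transpose * (A * Q.transpose).transpose = A * A.transpose := by
      rw [Matrix.transpose_mul, Matrix.transpose_transpose]
      calc A * Q.transpose * (Q * A.transpose)
          = A * (Q.transpose * Q) * A.transpose := by
            simp only [Matrix.mul_assoc]
        _ = A * A.transpose := by rw [hQ', Matrix.mul_one]
    rw [this]
    have h1 : A * A.transpose = A * (Matrix.diagonal (fun _ => (1:ℝ)) : Matrix (Fin n) (Fin n) ℝ) * A.transpose := by
      rw [Matrix.diagonal_one, Matrix.mul_one]
    rw [h1, key]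
    have : (fun i => s i ^ 2 * (1:ℝ) + c i ^ 2 * 1) = fun _ => (1:ℝ) := by
      funext i; rw [hs2, hc2]; ring
    rw [this, Matrix.diagonal_one]
  · rw [hS]
    have : A * Q.transpose * (Q * Matrix.diagonal lam * Q.transpose) *
        (A * Q.transpose).transpose = A * Matrix.diagonal lam * A.transpose := by
      rw [Matrix.transpose_mul, Matrix.transpose_transpose]
      calc A * Q.transpose * (Q * Matrix.diagonal lam * Q.transpose) * (Q * A.transpose)
          = A * (Q.transpose * Q) * Matrix.diagonal lam * ((Q.transpose * Q) * A.transpose) := by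
            simp only [Matrix.mul_assoc]
        _ = A * Matrix.diagonal lam * A.transpose := by
            rw [hQ', Matrix.mul_one, Matrix.one_mul]
    rw [this, key]
    exact congrArg Matrix.diagonal (funext hσeq)
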